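/- arXiv:2601.10279 — 5 statements merged into one kernel-verified Lean document; each statement's English description precedes it below -/
import Mathlib

section
/- Let A be an m×m real matrix, D a k×k real matrix, B an m×k real matrix, and suppose Σ = fromBlocks A B Bᵀ D is positive definite. Let μ₁ ∈ ℝ^m, μ₂ ∈ ℝ^k, μ = (μ₁, μ₂), and α = μ₂ − Bᵀ A⁻¹ μ₁. Then μ₁ᵀ A⁻¹ μ₁ ≤ μᵀ Σ⁻¹ μ, with equality if and only if α = 0. In particular, a factor model attains the maximal squared Sharpe ratio of the full asset universe (is efficient) if and only if all spanning-regression alphas of the excluded assets are zero. -/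
open Matrix

private lemma dp_mul {a b : ℕ} (M : Matrix (Fin a) (Fin b) ℝ)
    (v : Fin a → ℝ) (w : Fin b → ℝ) : v ⬝ᵥ (M *ᵥ w) = (Mᵀ *ᵥ v) ⬝ᵥ w := by
  rw [Matrix.dotProduct_mulVec]
  congr 1
  rw [← Matrix.transpose_transpose M, Matrix.vecMul_transpose, Matrix.transpose_transpose]

/-- **Efficiency iff zero alphas.**
With covariance `S = fromBlocks A B Bᵀ D` positive definite, means `μ = (μ₁, μ₂)` and
spanning-regression alphas `α = μ₂ − Bᵀ A⁻¹ μ₁`, the sub-model squared Sharpe ratio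
`μ₁ᵀ A⁻¹ μ₁` never exceeds the full one `μᵀ S⁻¹ μ`, with equality iff `α = 0`. -/
theorem submodel_sharpe_le_and_eq_iff_alpha_zero {m k : ℕ}
    (A : Matrix (Fin m) (Fin m) ℝ) (D : Matrix (Fin k) (Fin k) ℝ)
    (B : Matrix (Fin m) (Fin k) ℝ)
    (hPD : (Matrix.fromBlocks A B Bᵀ D).PosDef)
    (μ₁ : Fin m → ℝ) (μ₂ : Fin k → ℝ) :
    let μ : Fin m ⊕ Fin k → ℝ := Sum.elim μ₁ μ₂
    let α : Fin k → ℝ := μ₂ - Bᵀ *ᵥ (A⁻¹ *ᵥ μ₁)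
    μ₁ ⬝ᵥ (A⁻¹ *ᵥ μ₁) ≤ μ ⬝ᵥ ((Matrix.fromBlocks A B Bᵀ D)⁻¹ *ᵥ μ) ∧
      (μ₁ ⬝ᵥ (A⁻¹ *ᵥ μ₁) = μ ⬝ᵥ ((Matrix.fromBlocks A B Bᵀ D)⁻¹ *ᵥ μ) ↔ α = 0) := by
  intro μ α
  have hBH : Bᴴ = Bᵀ := by ext i j; simp [Matrix.conjTranspose_apply]
  -- A is positive definite
  have hA : A.PosDef := by
    refine Matrix.PosDef.of_dotProduct_mulVec_pos ?_ ?_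
    · ext i j
      have := congrFun (congrFun hPD.1 (Sum.inl i)) (Sum.inl j)
      simpa using this
    · intro x hx
      have hx' : (Sum.elim x 0 : Fin m ⊕ Fin k → ℝ) ≠ 0 := by
        intro hc; apply hx; ext i; exact congrFun hc (Sum.inl i)
      have := hPD.dotProduct_mulVec_pos hx'
      simpa [Matrix.fromBlocks_mulVec, sumElim_dotProduct_sumElim] using this
  letI := hA.isUnit.invertible
  -- Schur complement is positive definite
  set S : Matrix (Fin k) (Fin k) ℝ := D - Bᵀ * A⁻¹ * B with hSdef
  have hS : S.PosDef := by
    refine Matrix.PosDef.of_dotProduct_mulVec_pos ?_ ?_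
    · have h1 : (fromBlocks A B Bᴴ D).IsHermitian := by rw [hBH]; exact hPD.1
      have := (Matrix.IsHermitian.fromBlocks₁₁ B D hA.1).mp h1
      rwa [hBH] at this
    · intro y hy
      have hx' : (Sum.elim (-((A⁻¹ * B) *ᵥ y)) y : Fin m ⊕ Fin k → ℝ) ≠ 0 := by
        intro hc; apply hy; ext i; exact congrFun hc (Sum.inr i)
      have hpos := hPD.dotProduct_mulVec_pos hx'
      have hkey := Matrix.schur_complement_eq₁₁ (α := ℝ) B D (-((A⁻¹ * B) *ᵥ y)) y hA.1
      simp only [star_trivial, hBH] at hkey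
      simp only [star_trivial] at hpos ⊢
      rw [Matrix.dotProduct_mulVec, hkey] at hpos
      simpa [hSdef, Matrix.dotProduct_mulVec] using hpos
  letI := hS.isUnit.invertible
  letI := hPD.isUnit.invertible
  -- block inverse formula
  have hinv : (fromBlocks A B Bᵀ D)⁻¹ =
      fromBlocks (A⁻¹ + A⁻¹ * B * S⁻¹ * Bᵀ * A⁻¹) (-(A⁻¹ * B * S⁻¹))
        (-(S⁻¹ * Bᵀ * A⁻¹)) S⁻¹ := by
    have h1 : (D - Bᵀ * ⅟A * B) = S := by rw [hSdef, invOf_eq_nonsing_inv]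
    letI : Invertible (D - Bᵀ * ⅟A * B) := h1 ▸ hS.isUnit.invertible
    have h2 := Matrix.invOf_fromBlocks₁₁_eq A B Bᵀ D
    rw [← invOf_eq_nonsing_inv (fromBlocks A B Bᵀ D), h2]
    simp only [invOf_eq_nonsing_inv, ← hSdef]
  -- symmetry facts
  have hAinv : (A⁻¹)ᵀ = A⁻¹ := by
    ext i j; simpa using congrFun (congrFun hA.1.inv i) j
  have hSinv : (S⁻¹)ᵀ = S⁻¹ := by
    ext i j; simpa using congrFun (congrFun hS.1.inv i) j
  set t : Fin m → ℝ := A⁻¹ *ᵥ μ₁ with ht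
  set β : Fin k → ℝ := Bᵀ *ᵥ t with hβ
  have hα : α = μ₂ - β := rfl
  have hA1 : ∀ w : Fin m → ℝ, μ₁ ⬝ᵥ (A⁻¹ *ᵥ w) = t ⬝ᵥ w := by
    intro w; rw [dp_mul, hAinv, ← ht]
  have hB1 : ∀ w : Fin k → ℝ, t ⬝ᵥ (B *ᵥ w) = β ⬝ᵥ w := by
    intro w; rw [dp_mul, ← hβ]
  have hcross : β ⬝ᵥ (S⁻¹ *ᵥ μ₂) = μ₂ ⬝ᵥ (S⁻¹ *ᵥ β) := by
    rw [dp_mul, hSinv, dotProduct_comm]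
  -- key decomposition
  have hdec : μ ⬝ᵥ ((fromBlocks A B Bᵀ D)⁻¹ *ᵥ μ) =
      μ₁ ⬝ᵥ (A⁻¹ *ᵥ μ₁) + α ⬝ᵥ (S⁻¹ *ᵥ α) := by
    show (Sum.elim μ₁ μ₂) ⬝ᵥ ((fromBlocks A B Bᵀ D)⁻¹ *ᵥ Sum.elim μ₁ μ₂) = _
    rw [hinv, Matrix.fromBlocks_mulVec, sumElim_dotProduct_sumElim]
    simp only [Sum.elim_comp_inl, Sum.elim_comp_inr, Matrix.add_mulVec, Matrix.neg_mulVec,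
      dotProduct_add, dotProduct_neg, ← Matrix.mulVec_mulVec, hA1, hB1,
      ← ht, ← hβ]
    rw [hα]
    simp only [Matrix.mulVec_sub, dotProduct_sub, sub_dotProduct]
    rw [hcross]
    ring
  have hq : 0 ≤ α ⬝ᵥ (S⁻¹ *ᵥ α) := by
    simpa using hS.inv.posSemidef.dotProduct_mulVec_nonneg α
  constructor
  · rw [hdec]; linarith
  · rw [hdec]
    constructor
    · intro h
      by_contra hne
      have := hS.inv.dotProduct_mulVec_pos hne
      simp only [star_trivial] at this
      linarith
    · intro h; rw [h]; simp; rfl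
end

section
/- Let ι be a (nonempty) finite index type, Σ : Matrix ι ι ℝ positive definite, and μ : ι → ℝ. For every subset S of ι, the principal submatrix Σ_S (obtained by restricting rows and columns of Σ to S via the inclusion) is positive definite, and the sub-model Sharpe ratios are monotone: for all subsets S ⊆ S' of ι, 0 ≤ SR²(S) ≤ SR²(S') ≤ SR²(ι), where SR²(S) := μ_Sᵀ (Σ_S)⁻¹ μ_S and μ_S is the restriction of μ to S. In particular, every candidate factor model has maximal squared Sharpe ratio at most that of the full candidate universe. -/
open Matrix

/-- The maximal squared Sharpe ratio of the sub-model indexed by the subset `S`: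
`SR²(S) = μ_Sᵀ (Σ_S)⁻¹ μ_S` where `Σ_S` is the principal submatrix of the covariance
matrix on `S` and `μ_S` the corresponding subvector of means. -/
noncomputable def subSR {ι : Type*} [Fintype ι] [DecidableEq ι]
    (C : Matrix ι ι ℝ) (μ : ι → ℝ) (S : Finset ι) : ℝ :=
  (fun i : S => μ i) ⬝ᵥ
    ((C.submatrix (fun i : S => (i : ι)) (fun i : S => (i : ι)))⁻¹ *ᵥ fun i : S => μ i)

section helpers

set_option linter.unusedSectionVars false

variable {α β : Type*} [Fintype α] [Fintype β] [DecidableEq α] [DecidableEq β]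

private lemma dot_extend (f : α → β) (hf : Function.Injective f) (m : β → ℝ) (x : α → ℝ) :
    m ⬝ᵥ Function.extend f x 0 = (m ∘ f) ⬝ᵥ x := by
  rw [dotProduct, dotProduct]
  have h1 : ∑ b : β, m b * Function.extend f x 0 b
      = ∑ b ∈ Finset.univ.image f, m b * Function.extend f x 0 b := by
    refine (Finset.sum_subset (Finset.subset_univ _) fun b _ hb => ?_).symm
    rw [Function.extend_apply' _ _ _
      (fun ⟨a, ha⟩ => hb (Finset.mem_image.2 ⟨a, Finset.mem_univ a, ha⟩))]
    simp
  rw [h1, Finset.sum_image (fun a _ b _ h => hf h)]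
  refine Finset.sum_congr rfl fun a _ => ?_
  rw [hf.extend_apply]
  rfl

private lemma quad_extend (f : α → β) (hf : Function.Injective f) (C : Matrix β β ℝ) (x : α → ℝ) :
    Function.extend f x 0 ⬝ᵥ (C *ᵥ Function.extend f x 0) = x ⬝ᵥ (C.submatrix f f *ᵥ x) := by
  rw [dotProduct_comm, dot_extend f hf]
  rw [dotProduct_comm]
  refine congrArg _ ?_
  funext a
  show (C *ᵥ Function.extend f x 0) (f a) = _
  rw [mulVec, mulVec, dot_extend f hf]
  rfl

private lemma extend_ne_zero (f : α → β) (hf : Function.Injective f) {x : α → ℝ} (hx : x ≠ 0) :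
    Function.extend f x 0 ≠ 0 := by
  intro h
  apply hx
  funext a
  have := congrFun h (f a)
  rwa [hf.extend_apply] at this

private lemma posdef_submatrix {n : Type*} [Fintype n] [DecidableEq n] {C : Matrix n n ℝ}
    (hPD : C.PosDef) (f : α → n) (hf : Function.Injective f) :
    (C.submatrix f f).PosDef := by
  refine Matrix.PosDef.of_dotProduct_mulVec_pos ?_ ?_
  · ext i j
    exact hPD.1.apply (f i) (f j)
  · intro x hx
    have h := hPD.dotProduct_mulVec_pos (extend_ne_zero f hf hx)
    simpa [star_trivial, quad_extend f hf] using h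

private lemma quad_bound {n : Type*} [Fintype n] [DecidableEq n] {A : Matrix n n ℝ}
    (hA : A.PosDef) (m y : n → ℝ) :
    2 * (m ⬝ᵥ y) - y ⬝ᵥ (A *ᵥ y) ≤ m ⬝ᵥ (A⁻¹ *ᵥ m) := by
  set w := A⁻¹ *ᵥ m with hw
  have hAinv : A * A⁻¹ = 1 := mul_nonsing_inv A (isUnit_iff_ne_zero.2 hA.det_pos.ne')
  have hinvA : A⁻¹ * A = 1 := nonsing_inv_mul A (isUnit_iff_ne_zero.2 hA.det_pos.ne')
  have hAw : A *ᵥ w = m := by rw [hw, mulVec_mulVec, hAinv, one_mulVec]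
  have hAt : Aᵀ = A := by
    ext i j
    simpa using hA.1.apply i j
  have hwAy : w ⬝ᵥ (A *ᵥ y) = m ⬝ᵥ y := by
    rw [hw, dotProduct_mulVec, ← mulVec_transpose, hAt, ← hw, hAw]
  have hwm : w ⬝ᵥ m = m ⬝ᵥ w := dotProduct_comm _ _
  have h0 := hA.posSemidef.dotProduct_mulVec_nonneg (y - w)
  rw [star_trivial, mulVec_sub, hAw, dotProduct_sub, sub_dotProduct, sub_dotProduct] at h0
  have hym : y ⬝ᵥ m = m ⬝ᵥ y := dotProduct_comm _ _
  rw [hwAy, hym, hwm] at h0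
  linarith

private lemma key_le {n : Type*} [Fintype n] [DecidableEq n] {C : Matrix n n ℝ}
    (hPD : C.PosDef) (f : α → n) (hf : Function.Injective f) (μ : n → ℝ) :
    (μ ∘ f) ⬝ᵥ ((C.submatrix f f)⁻¹ *ᵥ (μ ∘ f)) ≤ μ ⬝ᵥ (C⁻¹ *ᵥ μ) := by
  have hApd := posdef_submatrix hPD f hf
  set A := C.submatrix f f with hAdef
  set x := A⁻¹ *ᵥ (μ ∘ f) with hx
  have hAinv : A * A⁻¹ = 1 := mul_nonsing_inv A (isUnit_iff_ne_zero.2 hApd.det_pos.ne')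
  have hAx : A *ᵥ x = μ ∘ f := by rw [hx, mulVec_mulVec, hAinv, one_mulVec]
  have heq : (μ ∘ f) ⬝ᵥ (A⁻¹ *ᵥ (μ ∘ f)) = 2 * ((μ ∘ f) ⬝ᵥ x) - x ⬝ᵥ (A *ᵥ x) := by
    rw [hAx, dotProduct_comm x (μ ∘ f), ← hx]
    ring
  rw [heq]
  calc 2 * ((μ ∘ f) ⬝ᵥ x) - x ⬝ᵥ (A *ᵥ x)
      = 2 * (μ ⬝ᵥ Function.extend f x 0) -
        Function.extend f x 0 ⬝ᵥ (C *ᵥ Function.extend f x 0) := by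
        rw [dot_extend f hf, quad_extend f hf, hAdef]
    _ ≤ μ ⬝ᵥ (C⁻¹ *ᵥ μ) := quad_bound hPD μ _

end helpers

/-- **Positive definiteness of principal submatrices and monotonicity of Sharpe ratios.**
For a positive definite covariance `C` on a nonempty finite index type `ι` and means `μ`,
every principal submatrix is positive definite, and for `S ⊆ S'`,
`0 ≤ SR²(S) ≤ SR²(S') ≤ SR²(ι)`. -/
theorem subSR_monotone {ι : Type*} [Fintype ι] [Nonempty ι] [DecidableEq ι]
    (C : Matrix ι ι ℝ) (hPD : C.PosDef) (μ : ι → ℝ) :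
    (∀ S : Finset ι,
      (C.submatrix (fun i : S => (i : ι)) (fun i : S => (i : ι))).PosDef) ∧
    (∀ S S' : Finset ι, S ⊆ S' →
      0 ≤ subSR C μ S ∧ subSR C μ S ≤ subSR C μ S' ∧
        subSR C μ S' ≤ μ ⬝ᵥ (C⁻¹ *ᵥ μ)) := by
  have hsub : ∀ S : Finset ι,
      (C.submatrix (fun i : S => (i : ι)) (fun i : S => (i : ι))).PosDef :=
    fun S => posdef_submatrix hPD _ Subtype.val_injective
  refine ⟨hsub, fun S S' hSS' => ⟨?_, ?_, ?_⟩⟩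
  · have h := (hsub S).inv.posSemidef.dotProduct_mulVec_nonneg (fun i : S => μ i)
    simpa [subSR, star_trivial] using h
  · set g : S → S' := fun s => (⟨s.1, hSS' s.2⟩ : S') with hg
    have hginj : Function.Injective g := by
      intro a b h
      have h2 : (g a).1 = (g b).1 := by rw [h]
      exact Subtype.ext h2
    have key := key_le (hsub S') g hginj (fun i : S' => μ i)
    rw [submatrix_submatrix] at key
    exact key
  · exact key_le hPD (fun i : S' => (i : ι)) Subtype.val_injective μ
end

section
/- Let A be an m×m real matrix, b ∈ ℝ^m, d ∈ ℝ, and suppose the (m+1)×(m+1) block matrix Σ = fromBlocks A b bᵀ d (with d viewed as a 1×1 block) is positive definite. Let μ₁ ∈ ℝ^m, μ₂ ∈ ℝ, and set α = μ₂ − bᵀ A⁻¹ μ₁ and σ_ε = d − bᵀ A⁻¹ b. Then σ_ε > 0 and α² / σ_ε = (μ₁, μ₂)ᵀ Σ⁻¹ (μ₁, μ₂) − μ₁ᵀ A⁻¹ μ₁; that is, the squared alpha of a single added factor divided by its residual variance equals the increase in the maximal squared Sharpe ratio from adding that factor to the model. -/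
open Matrix

/-- **Single-factor version of the asset pricing duality (GRS).**
Adding a single asset with mean `μ₂`, variance `d` and covariance vector `b` with the
existing factors (means `μ₁`, covariance `A`), so that the joint covariance
`fromBlocks A b bᵀ d` is positive definite, the residual variance
`σε = d − bᵀ A⁻¹ b` is positive and `α² / σε = μᵀ Σ⁻¹ μ − μ₁ᵀ A⁻¹ μ₁`
where `α = μ₂ − bᵀ A⁻¹ μ₁`. -/
theorem single_factor_alpha_sq_div_resvar_eq_sharpe_increase {m : ℕ}
    (A : Matrix (Fin m) (Fin m) ℝ) (b : Fin m → ℝ) (d : ℝ)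
    (hPD : (Matrix.fromBlocks A (Matrix.of fun i (_ : Fin 1) => b i)
        (Matrix.of fun (_ : Fin 1) j => b j)
        (Matrix.of fun (_ _ : Fin 1) => d)).PosDef)
    (μ₁ : Fin m → ℝ) (μ₂ : ℝ) :
    let α : ℝ := μ₂ - b ⬝ᵥ (A⁻¹ *ᵥ μ₁)
    let σε : ℝ := d - b ⬝ᵥ (A⁻¹ *ᵥ b)
    let μ : Fin m ⊕ Fin 1 → ℝ := Sum.elim μ₁ fun _ => μ₂
    0 < σε ∧
      α ^ 2 / σε =
        μ ⬝ᵥ ((Matrix.fromBlocks A (Matrix.of fun i (_ : Fin 1) => b i)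
          (Matrix.of fun (_ : Fin 1) j => b j)
          (Matrix.of fun (_ _ : Fin 1) => d))⁻¹ *ᵥ μ) - μ₁ ⬝ᵥ (A⁻¹ *ᵥ μ₁) := by
  intro α σε μ
  set B : Matrix (Fin m) (Fin 1) ℝ := Matrix.of fun i (_ : Fin 1) => b i with hB
  set C : Matrix (Fin 1) (Fin m) ℝ := Matrix.of fun (_ : Fin 1) j => b j with hC
  set D : Matrix (Fin 1) (Fin 1) ℝ := Matrix.of fun (_ _ : Fin 1) => d with hD
  set S : Matrix (Fin m ⊕ Fin 1) (Fin m ⊕ Fin 1) ℝ := Matrix.fromBlocks A B C D with hS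
  -- A is positive definite
  have hA : A.PosDef := by
    refine Matrix.PosDef.of_dotProduct_mulVec_pos ?_ ?_
    · have h := hPD.1
      ext i j
      have := congrFun (congrFun h (Sum.inl j)) (Sum.inl i)
      simpa [hS, Matrix.conjTranspose_apply] using this.symm
    · intro x hx
      have h := hPD.dotProduct_mulVec_pos (x := Sum.elim x 0) (by
        intro h0
        apply hx; funext i; exact congrFun h0 (Sum.inl i))
      simpa [hS, Matrix.fromBlocks_mulVec, sumElim_dotProduct_sumElim] using h
  have hAdet : IsUnit A.det := (Matrix.isUnit_iff_isUnit_det A).mp hA.isUnit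
  have hAAinv : A * A⁻¹ = 1 := Matrix.mul_nonsing_inv A hAdet
  -- σε > 0
  have hσ : 0 < σε := by
    have hdetS : 0 < S.det := hPD.det_pos
    letI := hA.isUnit.invertible
    have hdf : S.det = A.det * (D - C * ⅟A * B).det := Matrix.det_fromBlocks₁₁ A B C D
    have hinv : (⅟A : Matrix (Fin m) (Fin m) ℝ) = A⁻¹ := (Matrix.invOf_eq_nonsing_inv A)
    have h2 : (C * A⁻¹ * B) 0 0 = b ⬝ᵥ A⁻¹ *ᵥ b := by
      rw [Matrix.dotProduct_mulVec]
      simp [Matrix.mul_apply, hB, hC, Matrix.vecMul, dotProduct, Finset.sum_mul,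
        mul_comm, mul_assoc, mul_left_comm]
    have h1 : (D - C * ⅟A * B).det = σε := by
      rw [hinv, Matrix.det_fin_one, Matrix.sub_apply, h2]
      simp [hD, σε]
    rw [hdf, h1] at hdetS
    rcases mul_pos_iff.mp hdetS with ⟨_, h⟩ | ⟨h, _⟩
    · exact h
    · exact absurd hA.det_pos (not_lt.mpr h.le)
  refine ⟨hσ, ?_⟩
  have hs0 : σε ≠ 0 := hσ.ne'
  set c : ℝ := α / σε with hc
  set w : Fin m ⊕ Fin 1 → ℝ :=
    Sum.elim (A⁻¹ *ᵥ μ₁ - c • (A⁻¹ *ᵥ b)) (fun _ => c) with hw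
  have hBv : ∀ t : ℝ, B *ᵥ (fun _ => t) = t • b := by
    intro t; funext i
    simp [hB, Matrix.mulVec, dotProduct, mul_comm]
  have hSw : S *ᵥ w = μ := by
    rw [hS, hw, Matrix.fromBlocks_mulVec]
    simp only [Sum.elim_comp_inl, Sum.elim_comp_inr]
    have htop : A *ᵥ (A⁻¹ *ᵥ μ₁ - c • (A⁻¹ *ᵥ b)) + B *ᵥ (fun _ => c) = μ₁ := by
      rw [Matrix.mulVec_sub, Matrix.mulVec_smul, Matrix.mulVec_mulVec, Matrix.mulVec_mulVec,
        hAAinv, Matrix.one_mulVec, Matrix.one_mulVec, hBv]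
      abel
    have hbot : C *ᵥ (A⁻¹ *ᵥ μ₁ - c • (A⁻¹ *ᵥ b)) + D *ᵥ (fun _ => c)
        = (fun _ : Fin 1 => μ₂) := by
      funext i
      have hCv : ∀ v : Fin m → ℝ, (C *ᵥ v) i = b ⬝ᵥ v := by
        intro v; simp [hC, Matrix.mulVec, dotProduct]
      have hDv : (D *ᵥ (fun _ => c)) i = d * c := by
        simp [hD, Matrix.mulVec, dotProduct]
      simp only [Pi.add_apply, hCv, hDv]
      rw [dotProduct_sub, dotProduct_smul]
      have : b ⬝ᵥ (A⁻¹ *ᵥ μ₁) - c * (b ⬝ᵥ (A⁻¹ *ᵥ b)) + d * c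
          = b ⬝ᵥ (A⁻¹ *ᵥ μ₁) + c * σε := by ring
      rw [smul_eq_mul, this, hc, div_mul_cancel₀ _ hs0]
      show b ⬝ᵥ (A⁻¹ *ᵥ μ₁) + (μ₂ - b ⬝ᵥ (A⁻¹ *ᵥ μ₁)) = μ₂
      ring
    rw [htop, hbot]
  have hSdet : IsUnit S.det := (Matrix.isUnit_iff_isUnit_det S).mp hPD.isUnit
  have hinvμ : S⁻¹ *ᵥ μ = w := by
    rw [← hSw, Matrix.mulVec_mulVec, Matrix.nonsing_inv_mul S hSdet, Matrix.one_mulVec]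
  have hAit : A⁻¹ᵀ = A⁻¹ := by
    have := hA.isHermitian.inv.eq
    simpa [Matrix.conjTranspose_eq_transpose_of_trivial] using this
  have hsym : μ₁ ⬝ᵥ (A⁻¹ *ᵥ b) = b ⬝ᵥ (A⁻¹ *ᵥ μ₁) := by
    rw [Matrix.dotProduct_mulVec, ← Matrix.mulVec_transpose, hAit, dotProduct_comm]
  rw [hinvμ, hw]
  have hdot : μ ⬝ᵥ Sum.elim (A⁻¹ *ᵥ μ₁ - c • (A⁻¹ *ᵥ b)) (fun _ : Fin 1 => c)
      = μ₁ ⬝ᵥ (A⁻¹ *ᵥ μ₁) - c * (b ⬝ᵥ (A⁻¹ *ᵥ μ₁)) + μ₂ * c := by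
    rw [sumElim_dotProduct_sumElim, dotProduct_sub, dotProduct_smul,
      smul_eq_mul, hsym]
    simp [dotProduct]
  rw [hdot, hc]
  have hα : α = μ₂ - b ⬝ᵥ (A⁻¹ *ᵥ μ₁) := rfl
  rw [pow_two, mul_div_assoc, hα]
  ring
end

section
/- Let ι be a finite index type with N = card ι, Σ : Matrix ι ι ℝ positive definite, μ : ι → ℝ, and for a subset S of ι let SR²(S) := μ_Sᵀ (Σ_S)⁻¹ μ_S (with Σ_S the principal submatrix and μ_S the subvector). Let T > N be a real number, and let S₁, S₂ be two subsets (models) of equal size k = card S₁ = card S₂ < N. For i = 1, 2, define the GRS value GRS(S_i) := ((T − N)/(N − k)) · ((1 + SR²(ι))/(1 + SR²(S_i)) − 1). Then GRS(S₁) < GRS(S₂) if and only if SR²(S₁) > SR²(S₂): minimizing the cross-sectional mispricing measured by the GRS value over equal-size candidate models is equivalent to maximizing the model's maximal squared Sharpe ratio. -/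
open Matrix

lemma subSR_nonneg {ι : Type*} [Fintype ι] [DecidableEq ι]
    (C : Matrix ι ι ℝ) (hPD : C.PosDef) (μ : ι → ℝ) (S : Finset ι) :
    0 ≤ subSR C μ S := by
  have h : ((C.submatrix (fun i : S => (i : ι)) (fun i : S => (i : ι)))⁻¹).PosSemidef :=
    (hPD.posSemidef.submatrix _).inv
  simpa [subSR] using h.re_dotProduct_nonneg (fun i : S => μ i)

/-- **GRS comparison of equal-size models is equivalent to Sharpe-ratio comparison.**
For two candidate models `S₁, S₂` of equal size `k < N` in a universe with positive
definite covariance, and `T > N`, the GRS value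
`GRS(S) = ((T − N)/(N − k)) ((1 + SR²(ι))/(1 + SR²(S)) − 1)` satisfies
`GRS(S₁) < GRS(S₂) ↔ SR²(S₂) < SR²(S₁)`. -/
theorem grs_lt_iff_sharpe_gt {ι : Type*} [Fintype ι] [DecidableEq ι]
    (C : Matrix ι ι ℝ) (hPD : C.PosDef) (μ : ι → ℝ)
    (T : ℝ) (hT : (Fintype.card ι : ℝ) < T)
    (S₁ S₂ : Finset ι) (hcard : S₁.card = S₂.card)
    (hk : S₁.card < Fintype.card ι) :
    let N : ℝ := Fintype.card ι
    let SRfull : ℝ := μ ⬝ᵥ (C⁻¹ *ᵥ μ)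
    let GRS : Finset ι → ℝ := fun S =>
      ((T - N) / (N - (S.card : ℝ))) * ((1 + SRfull) / (1 + subSR C μ S) - 1)
    GRS S₁ < GRS S₂ ↔ subSR C μ S₂ < subSR C μ S₁ := by
  intro N SRfull GRS
  have hSR1 := subSR_nonneg C hPD μ S₁
  have hSR2 := subSR_nonneg C hPD μ S₂
  have hfull : 0 ≤ SRfull := by
    simpa using hPD.posSemidef.inv.re_dotProduct_nonneg μ
  have h1 : (0:ℝ) < 1 + subSR C μ S₁ := by linarith
  have h2 : (0:ℝ) < 1 + subSR C μ S₂ := by linarith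
  have hnum : (0:ℝ) < 1 + SRfull := by linarith
  have hkN : ((S₁.card : ℝ)) < N := by simp only [N]; exact_mod_cast hk
  have hcoef : (0:ℝ) < (T - N) / (N - (S₁.card : ℝ)) := by
    apply div_pos <;> linarith
  simp only [GRS, ← hcard]
  rw [mul_lt_mul_iff_right₀ hcoef, sub_lt_sub_iff_right,
    div_lt_div_iff_of_pos_left hnum h1 h2]
  constructor <;> intro h <;> linarith
end

section
/- Let Σ be an n×n real positive definite matrix and μ ∈ ℝ^n. For j = 1, 2, let e_j be a bijection identifying the index set with the disjoint sum of model j's assets (size m_j) and its complement (size n − m_j); write the reindexed covariance as Σ^(j) = fromBlocks A_j B_j B_jᵀ D_j and the reindexed means as (μ₁^(j), μ₂^(j)), and set α_j = μ₂^(j) − B_jᵀ A_j⁻¹ μ₁^(j) and Σ_{ε,j} = D_j − B_jᵀ A_j⁻¹ B_j. Then α₁ᵀ Σ_{ε,1}⁻¹ α₁ < α₂ᵀ Σ_{ε,2}⁻¹ α₂ if and only if μ₁^(1)ᵀ A₁⁻¹ μ₁^(1) > μ₁^(2)ᵀ A₂⁻¹ μ₁^(2); that is, model 1 has strictly smaller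 alpha-based mispricing with respect to the assets outside it than model 2 exactly when model 1 has the larger maximal squared Sharpe ratio, so the additional test assets are irrelevant for the comparison. -/
open Matrix

section AuxBS

variable {m k : Type*} [Fintype m] [Fintype k] [DecidableEq m] [DecidableEq k]

lemma posDef_submatrix_equiv {n' : Type*} [Fintype n'] [DecidableEq n']
    {M : Matrix n' n' ℝ} (hM : M.PosDef) (e : m ≃ n') :
    (M.submatrix e e).PosDef := by
  refine Matrix.PosDef.of_dotProduct_mulVec_pos ((isHermitian_submatrix_equiv e).mpr hM.1) fun x hx => ?_
  have hx' : x ∘ e.symm ≠ 0 := by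
    intro h
    apply hx
    funext i
    have := congrFun h (e i)
    simpa using this
  have := hM.dotProduct_mulVec_pos hx'
  simpa [submatrix_mulVec_equiv, dotProduct_comp_equiv_symm,
    ← comp_equiv_symm_dotProduct] using this

variable {m k : Type*} [Fintype m] [Fintype k] [DecidableEq m] [DecidableEq k]

lemma posDef_blockA {A : Matrix m m ℝ} {B : Matrix m k ℝ} {D : Matrix k k ℝ}
    (hM : (fromBlocks A B Bᵀ D).PosDef) : A.PosDef := by
  refine Matrix.PosDef.of_dotProduct_mulVec_pos ?_ ?_
  · have h := hM.1
    have : (fromBlocks A B Bᵀ D)ᵀ = fromBlocks Aᵀ B Bᵀ Dᵀ := by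
      rw [fromBlocks_transpose, transpose_transpose]
    rw [Matrix.IsHermitian, conjTranspose_eq_transpose_of_trivial, this] at h
    have := congrArg Matrix.toBlocks₁₁ h
    simpa [Matrix.toBlocks_fromBlocks₁₁, Matrix.IsSymm] using this
  · intro x hx
    have hz : (Sum.elim x 0 : m ⊕ k → ℝ) ≠ 0 := by
      intro h
      exact hx (funext fun i => congrFun h (Sum.inl i))
    have := hM.dotProduct_mulVec_pos hz
    simpa [fromBlocks_mulVec, sumElim_dotProduct_sumElim] using this

lemma posDef_schur {A : Matrix m m ℝ} {B : Matrix m k ℝ} {D : Matrix k k ℝ}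
    (hM : (fromBlocks A B Bᵀ D).PosDef) : (D - Bᵀ * A⁻¹ * B).PosDef := by
  have hA : A.PosDef := posDef_blockA hM
  have : Invertible A := hA.isUnit.invertible
  refine Matrix.PosDef.of_dotProduct_mulVec_pos ?_ ?_
  · have := ((Matrix.IsHermitian.fromBlocks₁₁ (A := A) B D hA.1).mp ?_)
    · simpa [conjTranspose_eq_transpose_of_trivial] using this
    · simpa [conjTranspose_eq_transpose_of_trivial] using hM.1
  · intro y hy
    have hz : (Sum.elim (-((A⁻¹ * B) *ᵥ y)) y : m ⊕ k → ℝ) ≠ 0 := by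
      intro h
      exact hy (funext fun i => congrFun h (Sum.inr i))
    have hpos := hM.dotProduct_mulVec_pos hz
    have hs := Matrix.schur_complement_eq₁₁ (A := A) B D (-((A⁻¹ * B) *ᵥ y)) y hA.1
    simp only [star_trivial, neg_add_cancel] at hs
    rw [show (Bᴴ : Matrix k m ℝ) = Bᵀ from conjTranspose_eq_transpose_of_trivial _] at hs
    simp only [star_trivial, dotProduct_mulVec] at hpos
    rw [hs] at hpos
    simpa [dotProduct_mulVec] using hpos

lemma quad_decomp {A : Matrix m m ℝ} {B : Matrix m k ℝ} {D : Matrix k k ℝ}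
    (hM : (fromBlocks A B Bᵀ D).PosDef) (ν : m → ℝ) (ρ : k → ℝ) :
    Sum.elim ν ρ ⬝ᵥ ((fromBlocks A B Bᵀ D)⁻¹ *ᵥ Sum.elim ν ρ) =
      ν ⬝ᵥ (A⁻¹ *ᵥ ν) +
        (ρ - Bᵀ *ᵥ (A⁻¹ *ᵥ ν)) ⬝ᵥ ((D - Bᵀ * A⁻¹ * B)⁻¹ *ᵥ (ρ - Bᵀ *ᵥ (A⁻¹ *ᵥ ν))) := by
  have hA := posDef_blockA hM
  have hS := posDef_schur hM
  have hAdet : IsUnit A.det := isUnit_iff_ne_zero.mpr hA.det_pos.ne'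
  have hSdet : IsUnit (D - Bᵀ * A⁻¹ * B).det := isUnit_iff_ne_zero.mpr hS.det_pos.ne'
  have hMdet : IsUnit (fromBlocks A B Bᵀ D).det := isUnit_iff_ne_zero.mpr hM.det_pos.ne'
  set α := ρ - Bᵀ *ᵥ (A⁻¹ *ᵥ ν) with hα
  set w := (D - Bᵀ * A⁻¹ * B)⁻¹ *ᵥ α with hw
  set z : m ⊕ k → ℝ := Sum.elim (A⁻¹ *ᵥ ν - A⁻¹ *ᵥ (B *ᵥ w)) w with hzdef
  have hSw : (D - Bᵀ * A⁻¹ * B) *ᵥ w = α := by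
    rw [hw, mulVec_mulVec, mul_nonsing_inv _ hSdet, one_mulVec]
  have hMz : fromBlocks A B Bᵀ D *ᵥ z = Sum.elim ν ρ := by
    rw [hzdef, fromBlocks_mulVec]
    simp only [Sum.elim_comp_inl, Sum.elim_comp_inr]
    have h1 : A *ᵥ (A⁻¹ *ᵥ ν - A⁻¹ *ᵥ (B *ᵥ w)) + B *ᵥ w = ν := by
      rw [mulVec_sub, mulVec_mulVec, mulVec_mulVec, mul_nonsing_inv _ hAdet, one_mulVec,
        one_mulVec, sub_add_cancel]
    have h2 : Bᵀ *ᵥ (A⁻¹ *ᵥ ν - A⁻¹ *ᵥ (B *ᵥ w)) + D *ᵥ w = ρ := by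
      have expand : Bᵀ *ᵥ (A⁻¹ *ᵥ ν - A⁻¹ *ᵥ (B *ᵥ w)) + D *ᵥ w
          = Bᵀ *ᵥ (A⁻¹ *ᵥ ν) + (D - Bᵀ * A⁻¹ * B) *ᵥ w := by
        rw [mulVec_sub, sub_mulVec]
        rw [show (Bᵀ * A⁻¹ * B) *ᵥ w = Bᵀ *ᵥ (A⁻¹ *ᵥ (B *ᵥ w)) by
          rw [← mulVec_mulVec, ← mulVec_mulVec]]
        abel
      rw [expand, hSw, hα]
      abel
    rw [h1, h2]
  have hz : (fromBlocks A B Bᵀ D)⁻¹ *ᵥ Sum.elim ν ρ = z := by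
    rw [← hMz, mulVec_mulVec, nonsing_inv_mul _ hMdet, one_mulVec]
  rw [hz, hzdef, sumElim_dotProduct_sumElim]
  have hkey : ν ⬝ᵥ (A⁻¹ *ᵥ (B *ᵥ w)) = (Bᵀ *ᵥ (A⁻¹ *ᵥ ν)) ⬝ᵥ w := by
    have hAt : Aᵀ = A := by simpa [Matrix.IsSymm] using hA.1
    rw [mulVec_mulVec, dotProduct_mulVec, ← mulVec_transpose, transpose_mul,
      transpose_nonsing_inv, hAt, ← mulVec_mulVec]
  rw [dotProduct_sub, hkey]
  have : α ⬝ᵥ w = ρ ⬝ᵥ w - (Bᵀ *ᵥ (A⁻¹ *ᵥ ν)) ⬝ᵥ w := by rw [hα, sub_dotProduct]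
  rw [this]
  ring

lemma quad_total {n' : ℕ} (C : Matrix (Fin n') (Fin n') ℝ) (μ : Fin n' → ℝ)
    (e : m ≃ Fin n') (ν : m → ℝ) (hν : μ ∘ e = ν) :
    ν ⬝ᵥ ((C.submatrix e e)⁻¹ *ᵥ ν) = μ ⬝ᵥ (C⁻¹ *ᵥ μ) := by
  subst hν
  rw [inv_submatrix_equiv, submatrix_mulVec_equiv]
  have : (μ ∘ e) ∘ e.symm = μ := by funext i; simp
  rw [this, comp_equiv_dotProduct_comp_equiv]

end AuxBS

/-- **Test assets are irrelevant for model comparison (Barillas–Shanken).**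
For two models of the same positive definite universe, reindexed via bijections
`e₁, e₂` so that each model's assets come first, with block covariances
`fromBlocks Aⱼ Bⱼ Bⱼᵀ Dⱼ`, means `(μ₁ⱼ, μ₂ⱼ)`, spanning-regression alphas
`αⱼ = μ₂ⱼ − Bⱼᵀ Aⱼ⁻¹ μ₁ⱼ` and residual covariances `Σεⱼ = Dⱼ − Bⱼᵀ Aⱼ⁻¹ Bⱼ`:
model 1 has strictly smaller alpha-based mispricing than model 2 iff it has the
strictly larger maximal squared Sharpe ratio. -/
theorem alpha_mispricing_lt_iff_sharpe_gt {n m₁ k₁ m₂ k₂ : ℕ}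
    (C : Matrix (Fin n) (Fin n) ℝ) (hPD : C.PosDef) (μ : Fin n → ℝ)
    (e₁ : Fin m₁ ⊕ Fin k₁ ≃ Fin n) (e₂ : Fin m₂ ⊕ Fin k₂ ≃ Fin n)
    (A₁ : Matrix (Fin m₁) (Fin m₁) ℝ) (B₁ : Matrix (Fin m₁) (Fin k₁) ℝ)
    (D₁ : Matrix (Fin k₁) (Fin k₁) ℝ)
    (A₂ : Matrix (Fin m₂) (Fin m₂) ℝ) (B₂ : Matrix (Fin m₂) (Fin k₂) ℝ)
    (D₂ : Matrix (Fin k₂) (Fin k₂) ℝ)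
    (ν₁ : Fin m₁ → ℝ) (ρ₁ : Fin k₁ → ℝ) (ν₂ : Fin m₂ → ℝ) (ρ₂ : Fin k₂ → ℝ)
    (hC₁ : C.submatrix e₁ e₁ = Matrix.fromBlocks A₁ B₁ B₁ᵀ D₁)
    (hC₂ : C.submatrix e₂ e₂ = Matrix.fromBlocks A₂ B₂ B₂ᵀ D₂)
    (hμ₁ : μ ∘ e₁ = Sum.elim ν₁ ρ₁)
    (hμ₂ : μ ∘ e₂ = Sum.elim ν₂ ρ₂) :
    let α₁ : Fin k₁ → ℝ := ρ₁ - B₁ᵀ *ᵥ (A₁⁻¹ *ᵥ ν₁)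
    let α₂ : Fin k₂ → ℝ := ρ₂ - B₂ᵀ *ᵥ (A₂⁻¹ *ᵥ ν₂)
    let Sε₁ : Matrix (Fin k₁) (Fin k₁) ℝ := D₁ - B₁ᵀ * A₁⁻¹ * B₁
    let Sε₂ : Matrix (Fin k₂) (Fin k₂) ℝ := D₂ - B₂ᵀ * A₂⁻¹ * B₂
    (α₁ ⬝ᵥ (Sε₁⁻¹ *ᵥ α₁) < α₂ ⬝ᵥ (Sε₂⁻¹ *ᵥ α₂) ↔
      ν₂ ⬝ᵥ (A₂⁻¹ *ᵥ ν₂) < ν₁ ⬝ᵥ (A₁⁻¹ *ᵥ ν₁)) := by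
  intro α₁ α₂ Sε₁ Sε₂
  have hM₁ : (fromBlocks A₁ B₁ B₁ᵀ D₁).PosDef := hC₁ ▸ posDef_submatrix_equiv hPD e₁
  have hM₂ : (fromBlocks A₂ B₂ B₂ᵀ D₂).PosDef := hC₂ ▸ posDef_submatrix_equiv hPD e₂
  have key₁ := quad_decomp hM₁ ν₁ ρ₁
  have key₂ := quad_decomp hM₂ ν₂ ρ₂
  rw [← hC₁, quad_total C μ e₁ (Sum.elim ν₁ ρ₁) hμ₁] at key₁
  rw [← hC₂, quad_total C μ e₂ (Sum.elim ν₂ ρ₂) hμ₂] at key₂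
  constructor <;> intro h <;> [skip; skip] <;>
    · simp only [α₁, α₂, Sε₁, Sε₂] at h ⊢
      linarith
end
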